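/- Let x, y be real numbers with 2 ≤ y ≤ x, and let α > 0 satisfy φ₁(α,y) + log x = 0, i.e., Σ_{p ≤ y, p prime} log p/(p^α − 1) = log x. Then α ≥ log(1 + (log 2)/(log x))/log 2 ≥ 1/(2 log x). -/

import Mathlib

/-- The finite set of primes `p ≤ y`. -/
noncomputable def primesLE (y : ℝ) : Finset ℕ :=
  (Finset.range (⌊y⌋₊ + 1)).filter Nat.Prime

/-- If `2 ≤ y ≤ x` and `α > 0` is the saddle point, i.e.
`∑_{p ≤ y} log p/(p^α − 1) = log x`, then
`α ≥ log(1 + (log 2)/(log x))/log 2 ≥ 1/(2 log x)`. -/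
theorem alpha_lower_bound (x y α : ℝ) (h2y : 2 ≤ y) (hyx : y ≤ x) (hα : 0 < α)
    (hsaddle : ∑ p ∈ primesLE y, Real.log p / ((p : ℝ) ^ α - 1) = Real.log x) :
    Real.log (1 + Real.log 2 / Real.log x) / Real.log 2 ≤ α ∧
    1 / (2 * Real.log x) ≤ Real.log (1 + Real.log 2 / Real.log x) / Real.log 2 := by
  have hx2 : (2:ℝ) ≤ x := le_trans h2y hyx
  have hlx : 0 < Real.log x := Real.log_pos (by linarith)
  have hl2 : 0 < Real.log 2 := Real.log_pos (by norm_num)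
  have h2mem : 2 ∈ primesLE y := by
    simp only [primesLE, Finset.mem_filter, Finset.mem_range, Nat.lt_succ_iff]
    exact ⟨Nat.le_floor (by exact_mod_cast h2y), Nat.prime_two⟩
  have hterm : ∀ p ∈ primesLE y, 0 ≤ Real.log p / ((p : ℝ) ^ α - 1) := by
    intro p hp
    have hp2 : 2 ≤ p := (Finset.mem_filter.mp hp).2.two_le
    have hp1 : (1:ℝ) < (p:ℝ) := by exact_mod_cast Nat.lt_of_lt_of_le one_lt_two hp2
    have h1p : (1:ℝ) < (p:ℝ) ^ α :=
      Real.one_lt_rpow_iff_of_pos (by linarith) |>.mpr (Or.inl ⟨hp1, hα⟩)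
    exact div_nonneg (Real.log_nonneg hp1.le) (by linarith)
  have hkey : Real.log 2 / ((2:ℝ) ^ α - 1) ≤ Real.log x := by
    rw [← hsaddle]
    have := Finset.single_le_sum hterm h2mem
    simpa using this
  have h2a : (1:ℝ) < (2:ℝ) ^ α :=
    Real.one_lt_rpow_iff_of_pos (by norm_num) |>.mpr (Or.inl ⟨by norm_num, hα⟩)
  have hpos : 0 < (2:ℝ) ^ α - 1 := by linarith
  set t := Real.log 2 / Real.log x with ht
  have ht0 : 0 < t := div_pos hl2 hlx
  have ht1 : t ≤ 1 := (div_le_one hlx).mpr (Real.log_le_log (by norm_num) hx2)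
  have h1 : 1 + t ≤ (2:ℝ) ^ α := by
    have h' : Real.log 2 ≤ Real.log x * ((2:ℝ) ^ α - 1) := (div_le_iff₀ hpos).mp hkey
    have : t ≤ (2:ℝ) ^ α - 1 := by
      rw [ht, div_le_iff₀ hlx]; linarith
    linarith
  have hlog1 : Real.log (1 + t) ≤ α * Real.log 2 := by
    calc Real.log (1 + t) ≤ Real.log ((2:ℝ) ^ α) := Real.log_le_log (by linarith) h1
      _ = α * Real.log 2 := Real.log_rpow (by norm_num) α
  have hlow : t / (1 + t) ≤ Real.log (1 + t) := by
    have h1t : (0:ℝ) < 1 + t := by linarith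
    have := Real.log_le_sub_one_of_pos (show (0:ℝ) < (1 + t)⁻¹ by positivity)
    have hinv : Real.log (1 + t)⁻¹ = -Real.log (1 + t) := Real.log_inv _
    rw [hinv] at this
    have : 1 - (1 + t)⁻¹ ≤ Real.log (1 + t) := by linarith
    calc t / (1 + t) = 1 - (1 + t)⁻¹ := by field_simp; ring
      _ ≤ Real.log (1 + t) := this
  constructor
  · rw [div_le_iff₀ hl2]; exact hlog1
  · have h2' : t / 2 ≤ t / (1 + t) :=
      div_le_div_of_nonneg_left ht0.le (by linarith) (by linarith)
    have : t / 2 ≤ Real.log (1 + t) := le_trans h2' hlow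
    rw [le_div_iff₀ hl2]
    have heq : 1 / (2 * Real.log x) * Real.log 2 = t / 2 := by
      rw [ht]; ring
    rw [heq]; exact le_trans h2' hlow
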